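/- Let 0 < β < π/2 and define g_β : [-1,1] → ℝ by g_β(t) = -1 for -1 ≤ t < -cos(β/2), g_β(t) = 0 for -cos(β/2) ≤ t ≤ cos β, and g_β(t) = 1 for cos β < t ≤ 1. Then for every n ≥ 1 and every finite sequence x_1, …, x_N of unit vectors in ℝ^n, one has ∑_{i,j=1}^N g_β(⟨x_i,x_j⟩) ≥ 0. -/
import Mathlib


open scoped RealInnerProductSpace BigOperators
open Real

/-- Key geometric lemma: if `a` and `b` both make inner product `< -c2` with a
unit vector `y`, then `⟪a, b⟫ > 2 * c2 ^ 2 - 1`. -/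
private lemma gbeta_klem {n : ℕ} (c2 : ℝ) (hc2 : 0 < c2)
    (a b y : EuclideanSpace ℝ (Fin n)) (ha : ‖a‖ = 1) (hb : ‖b‖ = 1) (hy : ‖y‖ = 1)
    (hay : ⟪a, y⟫ < -c2) (hby : ⟪b, y⟫ < -c2) :
    2 * c2 ^ 2 - 1 < ⟪a, b⟫ := by
  have hs : |⟪a, y⟫| ≤ 1 := by
    have := abs_real_inner_le_norm a y
    rwa [ha, hy, one_mul] at this
  have ht : |⟪b, y⟫| ≤ 1 := by
    have := abs_real_inner_le_norm b y
    rwa [hb, hy, one_mul] at this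
  have hs1 : -1 ≤ ⟪a, y⟫ := (abs_le.mp hs).1
  have ht1 : -1 ≤ ⟪b, y⟫ := (abs_le.mp ht).1
  have e1 : ⟪a - ⟪a, y⟫ • y, b - ⟪b, y⟫ • y⟫ = ⟪a, b⟫ - ⟪a, y⟫ * ⟪b, y⟫ := by
    simp only [inner_sub_left, inner_sub_right, real_inner_smul_left, real_inner_smul_right,
      real_inner_self_eq_norm_mul_norm, hy, real_inner_comm y a, real_inner_comm y b]
    ring
  have nA : ‖a - ⟪a, y⟫ • y‖ ^ 2 = 1 - ⟪a, y⟫ ^ 2 := by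
    rw [norm_sub_sq_real, real_inner_smul_right, norm_smul, ha, hy, Real.norm_eq_abs,
      mul_one, one_pow, sq_abs]
    ring
  have nB : ‖b - ⟪b, y⟫ • y‖ ^ 2 = 1 - ⟪b, y⟫ ^ 2 := by
    rw [norm_sub_sq_real, real_inner_smul_right, norm_smul, hb, hy, Real.norm_eq_abs,
      mul_one, one_pow, sq_abs]
    ring
  have hAB : |⟪a - ⟪a, y⟫ • y, b - ⟪b, y⟫ • y⟫| ≤ ‖a - ⟪a, y⟫ • y‖ * ‖b - ⟪b, y⟫ • y‖ :=
    abs_real_inner_le_norm _ _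
  set A := ‖a - ⟪a, y⟫ • y‖ with hA
  set B := ‖b - ⟪b, y⟫ • y‖ with hB
  have hA0 : 0 ≤ A := norm_nonneg _
  have hB0 : 0 ≤ B := norm_nonneg _
  have h1 : -(A * B) ≤ ⟪a, b⟫ - ⟪a, y⟫ * ⟪b, y⟫ := by
    rw [e1] at hAB
    exact (abs_le.mp hAB).1
  have hA2 : A ^ 2 ≤ 1 - c2 ^ 2 := by
    rw [nA]; nlinarith
  have hB2 : B ^ 2 ≤ 1 - c2 ^ 2 := by
    rw [nB]; nlinarith
  have hABle : A * B ≤ 1 - c2 ^ 2 := by nlinarith [sq_nonneg (A - B)]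
  have hst : c2 ^ 2 < ⟪a, y⟫ * ⟪b, y⟫ := by
    nlinarith [mul_pos (show (0:ℝ) < -⟪a, y⟫ - c2 by linarith)
      (show (0:ℝ) < -⟪b, y⟫ - c2 by linarith),
      mul_pos hc2 (show (0:ℝ) < -⟪a, y⟫ - c2 by linarith),
      mul_pos hc2 (show (0:ℝ) < -⟪b, y⟫ - c2 by linarith)]
  linarith

private lemma gbeta_amgm {u v : ℝ} (hu : 1 ≤ u) (hv : 1 ≤ v) : 2 ≤ u / v + v / u := by
  have hu0 : 0 < u := by linarith
  have hv0 : 0 < v := by linarith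
  rw [div_add_div _ _ hv0.ne' hu0.ne', le_div_iff₀ (mul_pos hv0 hu0)]
  nlinarith [sq_nonneg (u - v)]

/-- Lemma 5: the step function `g_β` gives nonnegative sums for every finite
set of unit vectors in every dimension. -/
theorem gbeta_nonneg_sum (β : ℝ) (hβ0 : 0 < β) (hβ : β < π / 2)
    (g : ℝ → ℝ)
    (hg : ∀ t : ℝ, g t =
      if t < -Real.cos (β / 2) then -1 else if t ≤ Real.cos β then 0 else 1)
    (n N : ℕ) (hn : 1 ≤ n)
    (x : Fin N → EuclideanSpace ℝ (Fin n))
    (hx : ∀ i, ‖x i‖ = 1) :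
    0 ≤ ∑ i, ∑ j, g ⟪x i, x j⟫ := by
  classical
  have hπ := Real.pi_pos
  have hc2pos : 0 < Real.cos (β / 2) :=
    Real.cos_pos_of_mem_Ioo ⟨by linarith, by linarith⟩
  have hcpos : 0 < Real.cos β :=
    Real.cos_pos_of_mem_Ioo ⟨by linarith, by linarith⟩
  have hclt1 : Real.cos β < 1 := by
    have := Real.cos_lt_cos_of_nonneg_of_le_pi le_rfl (by linarith) hβ0
    simpa using this
  have hkey : Real.cos β = 2 * Real.cos (β / 2) ^ 2 - 1 := by
    have h2 : (2:ℝ) * (β / 2) = β := by ring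
    have := Real.cos_two_mul (β / 2)
    rwa [h2] at this
  set c2 := Real.cos (β / 2) with hc2def
  set c := Real.cos β with hcdef
  set D : Fin N → ℝ := fun i => ∑ j, if ⟪x i, x j⟫ < -c2 then (1:ℝ) else 0 with hD
  set Q : Fin N → ℝ := fun i => ∑ j, if (j = i ∨ c < ⟪x i, x j⟫) then (1:ℝ) else 0 with hQ
  have hdiag : ∀ i, ⟪x i, x i⟫ = (1:ℝ) := by
    intro i
    rw [real_inner_self_eq_norm_mul_norm, hx i]; norm_num
  -- rows of the main sum
  have hrow : ∀ i, ∑ j, g ⟪x i, x j⟫ = Q i - D i := by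
    intro i
    have hterm : ∀ j : Fin N, g ⟪x i, x j⟫ =
        (if (j = i ∨ c < ⟪x i, x j⟫) then (1:ℝ) else 0)
          - (if ⟪x i, x j⟫ < -c2 then (1:ℝ) else 0) := by
      intro j
      rw [hg]
      rcases eq_or_ne j i with rfl | hne
      · rw [hdiag j]
        have h1 : ¬((1:ℝ) < -c2) := by linarith
        have h2 : ¬((1:ℝ) ≤ c) := by linarith
        simp [h1, h2]
      · simp only [hne, false_or]
        split_ifs <;> first
          | (norm_num <;> linarith)
          | linarith
    rw [Finset.sum_congr rfl fun j _ => hterm j, Finset.sum_sub_distrib]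
  have hQnonneg : ∀ i, 0 ≤ Q i := by
    intro i
    simp only [hQ]
    exact Finset.sum_nonneg fun j _ => by positivity
  have hDone : ∀ i j, ⟪x i, x j⟫ < -c2 → 1 ≤ D i := by
    intro i j hij
    simp only [hD]
    calc (1:ℝ) = (if ⟪x i, x j⟫ < -c2 then (1:ℝ) else 0) := (if_pos hij).symm
      _ ≤ ∑ k, if ⟪x i, x k⟫ < -c2 then (1:ℝ) else 0 :=
        Finset.single_le_sum (f := fun k => if ⟪x i, x k⟫ < -c2 then (1:ℝ) else 0)
          (fun k _ => by positivity) (Finset.mem_univ j)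
  -- geometric fact: negative neighborhoods are positive cliques
  have hgeo : ∀ i j, ⟪x i, x j⟫ < -c2 → D j ≤ Q i := by
    intro i j hij
    simp only [hD, hQ]
    apply Finset.sum_le_sum
    intro k _
    by_cases hk : ⟪x j, x k⟫ < -c2
    · rw [if_pos hk]
      have hmem : (k = i ∨ c < ⟪x i, x k⟫) := by
        rcases eq_or_ne k i with rfl | hne
        · exact Or.inl rfl
        · right
          have := gbeta_klem c2 hc2pos (x i) (x k) (x j) (hx i) (hx k) (hx j)
            hij (by rw [real_inner_comm]; exact hk)
          rw [hkey]
          exact this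
      rw [if_pos hmem]
    · rw [if_neg hk]
      positivity
  -- the weighted double sum T
  set T : ℝ := ∑ i, ∑ j, if ⟪x i, x j⟫ < -c2 then D j / D i else 0 with hT
  -- T is at most ∑ Q i
  have hTle : T ≤ ∑ i, Q i := by
    rw [hT]
    apply Finset.sum_le_sum
    intro i _
    by_cases hex : ∃ j, ⟪x i, x j⟫ < -c2
    · obtain ⟨j0, hj0⟩ := hex
      have hDi : 1 ≤ D i := hDone i j0 hj0
      have hDipos : 0 < D i := by linarith
      have step1 : (∑ j, if ⟪x i, x j⟫ < -c2 then D j / D i else 0)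
          ≤ ∑ j, if ⟪x i, x j⟫ < -c2 then Q i / D i else 0 := by
        apply Finset.sum_le_sum
        intro j _
        by_cases hj : ⟪x i, x j⟫ < -c2
        · rw [if_pos hj, if_pos hj]
          exact (div_le_div_iff_of_pos_right hDipos).mpr (hgeo i j hj)
        · rw [if_neg hj, if_neg hj]
      have step2 : (∑ j, if ⟪x i, x j⟫ < -c2 then Q i / D i else 0) = Q i := by
        have e : ∀ j : Fin N, (if ⟪x i, x j⟫ < -c2 then Q i / D i else 0)
            = (Q i / D i) * (if ⟪x i, x j⟫ < -c2 then (1:ℝ) else 0) := by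
          intro j; split_ifs <;> ring
        rw [Finset.sum_congr rfl fun j _ => e j, ← Finset.mul_sum]
        have hDidef : ∑ j, (if ⟪x i, x j⟫ < -c2 then (1:ℝ) else 0) = D i := by
          simp only [hD]
        rw [hDidef, div_mul_cancel₀ _ hDipos.ne']
      linarith
    · push_neg at hex
      have : ∀ j : Fin N, (if ⟪x i, x j⟫ < -c2 then D j / D i else 0) = 0 := by
        intro j
        rw [if_neg (not_lt.mpr (hex j))]
      rw [Finset.sum_congr rfl fun j _ => this j, Finset.sum_const, smul_zero]
      exact hQnonneg i
  -- T is at least ∑ D i, by symmetry and AM-GM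
  have hswap : T = ∑ i, ∑ j, if ⟪x i, x j⟫ < -c2 then D i / D j else 0 := by
    rw [hT, Finset.sum_comm]
    refine Finset.sum_congr rfl fun i _ => Finset.sum_congr rfl fun j _ => ?_
    rw [real_inner_comm (x j) (x i)]
  have hsum2 : ∑ i, ∑ j, (if ⟪x i, x j⟫ < -c2 then (2:ℝ) else 0)
      ≤ ∑ i, ∑ j, ((if ⟪x i, x j⟫ < -c2 then D j / D i else 0)
        + (if ⟪x i, x j⟫ < -c2 then D i / D j else 0)) := by
    apply Finset.sum_le_sum
    intro i _
    apply Finset.sum_le_sum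
    intro j _
    by_cases hij : ⟪x i, x j⟫ < -c2
    · simp only [if_pos hij]
      exact gbeta_amgm (hDone j i (by rw [real_inner_comm]; exact hij)) (hDone i j hij)
    · rw [if_neg hij, if_neg hij, if_neg hij]
      norm_num
  have hL : ∑ i, ∑ j, (if ⟪x i, x j⟫ < -c2 then (2:ℝ) else 0) = 2 * ∑ i, D i := by
    rw [Finset.mul_sum]
    refine Finset.sum_congr rfl fun i _ => ?_
    simp only [hD]
    rw [Finset.mul_sum]
    refine Finset.sum_congr rfl fun j _ => ?_
    split_ifs <;> ring
  have hR : ∑ i, ∑ j, ((if ⟪x i, x j⟫ < -c2 then D j / D i else 0)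
      + (if ⟪x i, x j⟫ < -c2 then D i / D j else 0)) = 2 * T := by
    rw [Finset.sum_congr rfl fun i (_ : i ∈ Finset.univ) => Finset.sum_add_distrib,
      Finset.sum_add_distrib, ← hT, ← hswap]
    ring
  have hTge : ∑ i, D i ≤ T := by
    rw [hL, hR] at hsum2
    linarith
  have hfinal : ∑ i, ∑ j, g ⟪x i, x j⟫ = ∑ i, Q i - ∑ i, D i := by
    rw [Finset.sum_congr rfl fun i _ => hrow i, Finset.sum_sub_distrib]
  rw [hfinal]
  linarith
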